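/- Suppose D is unitary with inverse A = D⁻¹ = D*. Then the map (w, z) ↦ (Dw, z) is a bijection between the feasible set {(w,z) : Dw ∈ Γ, w = z} of the original S-SPADE formulation and the feasible set {(x,z) : x ∈ Γ, Ax = z} of the A-SPADE formulation, and it preserves the objective ‖z‖₀. In particular the two optimization problems have equal optimal values and corresponding optimal solutions. -/

import Mathlib

/-- In the unitary case, `(w, z) ↦ (Dw, z)` is a bijection between the feasible
set of the original S-SPADE formulation `{(w,z) : Dw ∈ Γ, w = z}` and that of
the A-SPADE formulation `{(x,z) : x ∈ Γ, Ax = z}`, preserving the objective `‖z‖₀`. -/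
theorem unitary_sspade_aspade_bijection (N : ℕ)
    (D A : EuclideanSpace ℂ (Fin N) →ₗ[ℂ] EuclideanSpace ℂ (Fin N))
    (hAD : ∀ w, A (D w) = w) (hDA : ∀ x, D (A x) = x)
    (hadj : ∀ w z, (inner ℂ (D w) z : ℂ) = (inner ℂ w (A z) : ℂ))
    (Γ : Set (EuclideanSpace ℂ (Fin N))) :
    Set.BijOn
      (fun p : EuclideanSpace ℂ (Fin N) × EuclideanSpace ℂ (Fin N) => (D p.1, p.2))
      {p | D p.1 ∈ Γ ∧ p.1 = p.2}
      {p | p.1 ∈ Γ ∧ A p.1 = p.2} ∧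
    ∀ p : EuclideanSpace ℂ (Fin N) × EuclideanSpace ℂ (Fin N),
      Set.ncard {i | ((fun q : EuclideanSpace ℂ (Fin N) × EuclideanSpace ℂ (Fin N) =>
          (D q.1, q.2)) p).2 i ≠ 0} = Set.ncard {i | p.2 i ≠ 0} := by
  refine ⟨⟨?_, ?_, ?_⟩, fun p => rfl⟩
  · rintro ⟨w, z⟩ ⟨h1, h2⟩
    exact ⟨h1, by simpa [hAD] using h2⟩
  · rintro ⟨w, z⟩ _ ⟨w', z'⟩ _ h
    have h1 : D w = D w' := congrArg Prod.fst h
    have h2 : z = z' := congrArg Prod.snd h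
    have : w = w' := by rw [← hAD w, ← hAD w', h1]
    simp [this, h2]
  · rintro ⟨x, z⟩ ⟨h1, h2⟩
    exact ⟨(A x, z), ⟨by simpa [hDA], by simpa [hDA] using h2⟩, by simp [hDA]⟩
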